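/- arXiv:math/0301064 — 2 statements merged into one kernel-verified Lean document; each statement's English description precedes it below -/
import Mathlib

section
/- Conversely, if the map c(i ⊗ j) = q_{ij} (i ▷ j) ⊗ i (with all q_{ij} nonzero and each map i ▷ − bijective) satisfies the braid equation on V⊗V⊗V, then ▷ is self-distributive: i ▷ (j ▷ k) = (i ▷ j) ▷ (i ▷ k) for all i,j,k ∈ X, and q satisfies the 2-cocycle condition q_{i, j ▷ k} q_{j,k} = q_{i ▷ j, i ▷ k} q_{i,k}. -/
open TensorProduct

/-- `c ⊗ id` acting on `(V ⊗ V) ⊗ V`. -/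
noncomputable def braidC12 {V : Type*} [AddCommGroup V] [Module ℂ V]
    (c : V ⊗[ℂ] V →ₗ[ℂ] V ⊗[ℂ] V) :
    (V ⊗[ℂ] V) ⊗[ℂ] V →ₗ[ℂ] (V ⊗[ℂ] V) ⊗[ℂ] V :=
  LinearMap.rTensor V c

/-- `id ⊗ c` acting on `(V ⊗ V) ⊗ V`, via the associator. -/
noncomputable def braidC23 {V : Type*} [AddCommGroup V] [Module ℂ V]
    (c : V ⊗[ℂ] V →ₗ[ℂ] V ⊗[ℂ] V) :
    (V ⊗[ℂ] V) ⊗[ℂ] V →ₗ[ℂ] (V ⊗[ℂ] V) ⊗[ℂ] V :=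
  (TensorProduct.assoc ℂ V V V).symm.toLinearMap ∘ₗ
    (LinearMap.lTensor V c) ∘ₗ (TensorProduct.assoc ℂ V V V).toLinearMap

/-- The braid equation `(c⊗id)(id⊗c)(c⊗id) = (id⊗c)(c⊗id)(id⊗c)`. -/
def IsBraiding {V : Type*} [AddCommGroup V] [Module ℂ V]
    (c : V ⊗[ℂ] V →ₗ[ℂ] V ⊗[ℂ] V) : Prop :=
  braidC12 c ∘ₗ braidC23 c ∘ₗ braidC12 c = braidC23 c ∘ₗ braidC12 c ∘ₗ braidC23 c

/-- If two scalar multiples of basis vectors agree and one scalar is nonzero,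
then the indices agree and the scalars agree. -/
lemma basis_smul_eq_smul_iff {V : Type*} [AddCommGroup V] [Module ℂ V] {I : Type*}
    (B : Module.Basis I ℂ V) {α β : ℂ} (hα : α ≠ 0) {u v : I}
    (h : α • B u = β • B v) : u = v ∧ α = β := by
  classical
  have h' := congrArg (fun w => B.repr w u) h
  simp only [map_smul, Module.Basis.repr_self, Finsupp.smul_single, smul_eq_mul, mul_one] at h'
  rw [Finsupp.single_apply, Finsupp.single_apply] at h'
  by_cases huv : v = u
  · subst huv
    simp only [if_pos rfl] at h'
    exact ⟨rfl, h'⟩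
  · simp only [if_neg huv, if_pos rfl] at h'
    exact absurd h' hα

theorem braid_equation_implies_rack_and_cocycle
    {V : Type*} [AddCommGroup V] [Module ℂ V] {X : Type*} [Fintype X]
    (x : Module.Basis X ℂ V) (op : X → X → X) (q : X → X → ℂˣ)
    (hbij : ∀ i, Function.Bijective (op i))
    (c : V ⊗[ℂ] V →ₗ[ℂ] V ⊗[ℂ] V)
    (hc : ∀ i j, c (x i ⊗ₜ[ℂ] x j) = (q i j : ℂ) • (x (op i j) ⊗ₜ[ℂ] x i))
    (hbraid : IsBraiding c) :
    (∀ i j k, op i (op j k) = op (op i j) (op i k)) ∧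
    (∀ i j k, q i (op j k) * q j k = q (op i j) (op i k) * q i k) := by
  have key : ∀ i j k, op i (op j k) = op (op i j) (op i k) ∧
      (q i j : ℂ) * q i k * q (op i j) (op i k) = q j k * q i (op j k) * q i j := by
    intro i j k
    have h := LinearMap.congr_fun hbraid ((x i ⊗ₜ[ℂ] x j) ⊗ₜ[ℂ] x k)
    simp only [IsBraiding, braidC12, braidC23, LinearMap.comp_apply,
      LinearMap.rTensor_tmul, LinearMap.lTensor_tmul,
      LinearEquiv.coe_coe, TensorProduct.assoc_tmul, TensorProduct.assoc_symm_tmul,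
      hc, ← TensorProduct.smul_tmul', TensorProduct.tmul_smul, map_smul, smul_smul] at h
    set B := (x.tensorProduct x).tensorProduct x with hB
    have hBapp : ∀ a b d : X, B ((a, b), d) = (x a ⊗ₜ[ℂ] x b) ⊗ₜ[ℂ] x d := by
      intro a b d
      simp [hB, Module.Basis.tensorProduct_apply]
    rw [← hBapp, ← hBapp] at h
    have hα : ((q i j : ℂ) * q i k * q (op i j) (op i k)) ≠ 0 := by
      exact mul_ne_zero (mul_ne_zero (Units.ne_zero _) (Units.ne_zero _)) (Units.ne_zero _)
    obtain ⟨h1, h2⟩ := basis_smul_eq_smul_iff B hα h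
    have h1' : op (op i j) (op i k) = op i (op j k) := by
      have := congrArg (fun p => p.1.1) h1
      simpa using this
    exact ⟨h1'.symm, h2⟩
  constructor
  · exact fun i j k => (key i j k).1
  · intro i j k
    have h2 := (key i j k).2
    have : ((q i (op j k) * q j k : ℂˣ) : ℂ) = ((q (op i j) (op i k) * q i k : ℂˣ) : ℂ) := by
      push_cast
      have hij : (q i j : ℂ) ≠ 0 := Units.ne_zero _
      apply mul_left_cancel₀ hij
      linear_combination -h2
    exact Units.ext this
end

section
/- The Jordanian braiding c defined on a basis x_1,...,x_θ by c(x_i ⊗ x_1) = q x_1 ⊗ x_i and c(x_i ⊗ x_j) = (q x_j + x_{j−1}) ⊗ x_i for 2 ≤ j ≤ θ (q ∈ ℂ×) satisfies the braid equation and is invertible. -/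
open TensorProduct

/-- Any map of the form `v ⊗ w ↦ T w ⊗ v` satisfies the braid equation. -/
theorem isBraiding_of_map_comm {V : Type*} [AddCommGroup V] [Module ℂ V]
    (T : V →ₗ[ℂ] V) :
    IsBraiding ((TensorProduct.map T LinearMap.id) ∘ₗ
      (TensorProduct.comm ℂ V V).toLinearMap) := by
  unfold IsBraiding
  apply TensorProduct.ext_threefold
  intro a b d
  simp [braidC12, braidC23, TensorProduct.assoc_tmul, TensorProduct.assoc_symm_tmul]

theorem jordanian_braiding_braid_equation_and_invertible
    {V : Type*} [AddCommGroup V] [Module ℂ V] {θ : ℕ} (hθ : 0 < θ)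
    (x : Module.Basis (Fin θ) ℂ V) (q : ℂ) (hq : q ≠ 0)
    (c : V ⊗[ℂ] V →ₗ[ℂ] V ⊗[ℂ] V)
    (hc1 : ∀ i, c (x i ⊗ₜ[ℂ] x ⟨0, hθ⟩) = q • (x ⟨0, hθ⟩ ⊗ₜ[ℂ] x i))
    (hc2 : ∀ i, ∀ j : Fin θ, 0 < j.val →
      c (x i ⊗ₜ[ℂ] x j) =
        q • (x j ⊗ₜ[ℂ] x i) +
          x ⟨j.val - 1, lt_of_le_of_lt (Nat.sub_le _ _) j.isLt⟩ ⊗ₜ[ℂ] x i) :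
    IsBraiding c ∧ Function.Bijective c := by
  classical
  -- the nilpotent shift map
  set N : Module.End ℂ V := x.constr ℂ (fun j =>
    if h : 0 < j.val then x ⟨j.val - 1, lt_of_le_of_lt (Nat.sub_le _ _) j.isLt⟩ else 0)
    with hNdef
  set T : Module.End ℂ V := q • (1 : Module.End ℂ V) + N with hTdef
  have hNb : ∀ j : Fin θ, N (x j) =
      if h : 0 < j.val then x ⟨j.val - 1, lt_of_le_of_lt (Nat.sub_le _ _) j.isLt⟩ else 0 := by
    intro j; rw [hNdef, Module.Basis.constr_basis]
  have hTb : ∀ j : Fin θ, T (x j) = q • x j +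
      (if h : 0 < j.val then x ⟨j.val - 1, lt_of_le_of_lt (Nat.sub_le _ _) j.isLt⟩ else 0) := by
    intro j
    rw [hTdef, LinearMap.add_apply, LinearMap.smul_apply, Module.End.one_apply, hNb]
  -- c is T ⊗ id composed with the flip
  have hT : ∀ i j, c (x i ⊗ₜ[ℂ] x j) = T (x j) ⊗ₜ[ℂ] x i := by
    intro i j
    by_cases h : 0 < j.val
    · rw [hc2 i j h, hTb j, dif_pos h, add_tmul, smul_tmul']
    · have hj : j = ⟨0, hθ⟩ := Fin.ext (by simp; omega)
      subst hj
      rw [hc1, hTb, dif_neg h, add_zero, smul_tmul']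
  have hcT : c = (TensorProduct.map T LinearMap.id) ∘ₗ
      (TensorProduct.comm ℂ V V).toLinearMap := by
    apply (x.tensorProduct x).ext
    rintro ⟨i, j⟩
    simp only [Module.Basis.tensorProduct_apply, LinearMap.comp_apply,
      LinearEquiv.coe_coe, TensorProduct.comm_tmul, TensorProduct.map_tmul,
      LinearMap.id_apply, hT]
  refine ⟨hcT ▸ isBraiding_of_map_comm T, ?_⟩
  -- N is nilpotent
  have key : ∀ m (j : Fin θ), (N ^ m) (x j) =
      if h : m ≤ j.val then
        x ⟨j.val - m, lt_of_le_of_lt (Nat.sub_le _ _) j.isLt⟩ else 0 := by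
    intro m
    induction m with
    | zero => intro j; simp
    | succ m ih =>
      intro j
      rw [pow_succ', Module.End.mul_apply, ih j]
      by_cases h : m ≤ j.val
      · rw [dif_pos h, hNb]
        by_cases h' : m + 1 ≤ j.val
        · rw [dif_pos (by simp; omega), dif_pos h']
          exact congrArg x (Fin.ext (by simp; omega))
        · rw [dif_neg (by simp; omega), dif_neg h']
      · rw [dif_neg h, map_zero, dif_neg (by omega)]
  have hNnil : IsNilpotent N := by
    refine ⟨θ, ?_⟩
    apply x.ext
    intro j
    rw [key θ j, dif_neg (by omega)]
    rfl
  -- T is a unit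
  have hscal : IsUnit (q • (1 : Module.End ℂ V)) := by
    have := (isUnit_iff_ne_zero.mpr hq).map (algebraMap ℂ (Module.End ℂ V))
    rwa [Module.algebraMap_end_eq_smul_id] at this
  have hTunit : IsUnit T := by
    rw [hTdef]
    exact hNnil.isUnit_add_left_of_commute hscal ((Commute.one_right N).smul_right q)
  have hTbij : Function.Bijective T := (Module.End.isUnit_iff T).mp hTunit
  -- conclude bijectivity of c
  set e : V ≃ₗ[ℂ] V := LinearEquiv.ofBijective T hTbij with hedef
  have hmap : (TensorProduct.map T (LinearMap.id : V →ₗ[ℂ] V)) =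
      (TensorProduct.congr e (LinearEquiv.refl ℂ V)).toLinearMap := by
    apply TensorProduct.ext'
    intro a b
    simp [hedef]
  rw [hcT, hmap]
  rw [LinearMap.coe_comp]
  exact (TensorProduct.congr e (LinearEquiv.refl ℂ V)).bijective.comp
    (TensorProduct.comm ℂ V V).bijective
end
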